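/- Let H₀ ⊂ H be a finite-dimensional subspace of dimension M invariant under a bounded self-adjoint operator A, and let w₁,…,w_N ∈ H₀ be an ε-almost orthonormal set of eigenvectors of A with ε < 1/(2(M+1)). Then there exist orthonormal vectors w′₁,…,w′_{M−N} ∈ H₀, orthogonal to each w_j, and real numbers μ′_j such that ‖(A − μ′_j)w′_j‖ < 4Mε for all j. -/

import Mathlib

open Finset in
lemma key_bound {H : Type*} [NormedAddCommGroup H] [InnerProductSpace ℂ H]
    (N : ℕ) (w : Fin N → H) (ε : ℝ) (hε0 : 0 < ε)
    (h1 : ∀ j, |‖w j‖ ^ 2 - 1| < ε)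
    (h2 : ∀ j k, j ≠ k → ‖(inner ℂ (w j) (w k) : ℂ)‖ < ε)
    (hNε : (N : ℝ) * ε ≤ 1 / 2)
    (c : Fin N → ℂ) (p : H) (hp : ∑ k, c k • w k = p)
    (hip : ∀ k, ‖(inner ℂ (w k) p : ℂ)‖ ≤ ε) :
    ‖p‖ ^ 2 ≤ 2 * N * ε ^ 2 := by
  set s : ℝ := ∑ k, ‖c k‖ with hs
  set q : ℝ := ∑ k, ‖c k‖ ^ 2 with hq
  have hs0 : 0 ≤ s := Finset.sum_nonneg fun k _ => norm_nonneg _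
  have hq0 : 0 ≤ q := Finset.sum_nonneg fun k _ => sq_nonneg _
  have hself : (‖p‖ ^ 2 : ℝ) = RCLike.re (inner ℂ p p : ℂ) :=
    (@inner_self_eq_norm_sq ℂ _ _ _ _ p).symm
  have hexpand : (inner ℂ p p : ℂ) = ∑ k, (starRingEnd ℂ) (c k) * (inner ℂ (w k) p : ℂ) := by
    have h0 : (inner ℂ p p : ℂ) = inner ℂ (∑ k, c k • w k) p := by rw [hp]
    rw [h0, sum_inner]
    exact Finset.sum_congr rfl fun k _ => inner_smul_left _ _ _
  -- (A) ‖p‖² ≤ ε s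
  have hA : ‖p‖ ^ 2 ≤ ε * s := by
    have h3' : ‖(inner ℂ p p : ℂ)‖ ≤ ε * s := by
      rw [hexpand]
      refine (norm_sum_le _ _).trans ?_
      rw [hs, Finset.mul_sum]
      refine Finset.sum_le_sum fun k _ => ?_
      rw [norm_mul, RCLike.norm_conj, mul_comm ε]
      exact mul_le_mul_of_nonneg_left (hip k) (norm_nonneg _)
    calc ‖p‖ ^ 2 = RCLike.re (inner ℂ p p : ℂ) := hself
      _ ≤ ‖(inner ℂ p p : ℂ)‖ := RCLike.re_le_norm _
      _ ≤ ε * s := h3'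
  -- (B) q - ε s² ≤ ‖p‖²
  have hinner : ∀ j, (inner ℂ (w j) p : ℂ) = ∑ k, c k * (inner ℂ (w j) (w k) : ℂ) := by
    intro j
    have h0 : (inner ℂ (w j) p : ℂ) = inner ℂ (w j) (∑ k, c k • w k) := by rw [hp]
    rw [h0, inner_sum]
    exact Finset.sum_congr rfl fun k _ => inner_smul_right _ _ _
  have hperj : ∀ j, ‖c j‖ ^ 2 - ε * ‖c j‖ * s ≤
      RCLike.re ((starRingEnd ℂ) (c j) * (inner ℂ (w j) p : ℂ)) := by
    intro j
    have hrw : (starRingEnd ℂ) (c j) * (inner ℂ (w j) p : ℂ)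
        = ∑ k, (starRingEnd ℂ) (c j) * (c k * (inner ℂ (w j) (w k) : ℂ)) := by
      rw [hinner j, Finset.mul_sum]
    rw [hrw, map_sum, ← Finset.add_sum_erase _ _ (Finset.mem_univ j)]
    have hdiag : ‖c j‖ ^ 2 * (1 - ε) ≤
        RCLike.re ((starRingEnd ℂ) (c j) * (c j * (inner ℂ (w j) (w j) : ℂ))) := by
      have he : (starRingEnd ℂ) (c j) * (c j * (inner ℂ (w j) (w j) : ℂ))
          = ((‖c j‖ ^ 2 : ℝ) : ℂ) * (inner ℂ (w j) (w j) : ℂ) := by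
        rw [← mul_assoc, RCLike.conj_mul]
        norm_cast
      rw [he]
      have hre : RCLike.re (((‖c j‖ ^ 2 : ℝ) : ℂ) * (inner ℂ (w j) (w j) : ℂ))
          = ‖c j‖ ^ 2 * RCLike.re (inner ℂ (w j) (w j) : ℂ) := Complex.re_ofReal_mul _ _
      rw [hre, @inner_self_eq_norm_sq ℂ]
      have := abs_lt.mp (h1 j)
      nlinarith [sq_nonneg (‖c j‖)]
    have hoff : ∀ k ∈ Finset.univ.erase j,
        -(ε * ‖c j‖ * ‖c k‖) ≤
        RCLike.re ((starRingEnd ℂ) (c j) * (c k * (inner ℂ (w j) (w k) : ℂ))) := by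
      intro k hk
      have hkj : j ≠ k := fun h => (Finset.mem_erase.mp hk).1 h.symm
      have hb : ‖(starRingEnd ℂ) (c j) * (c k * (inner ℂ (w j) (w k) : ℂ))‖
          ≤ ‖c j‖ * (‖c k‖ * ε) := by
        rw [norm_mul, norm_mul, RCLike.norm_conj]
        refine mul_le_mul_of_nonneg_left ?_ (norm_nonneg _)
        exact mul_le_mul_of_nonneg_left (h2 j k hkj).le (norm_nonneg _)
      have h4 := (abs_le.1 (RCLike.abs_re_le_norm
        ((starRingEnd ℂ) (c j) * (c k * (inner ℂ (w j) (w k) : ℂ))))).1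
      have h5 := (neg_le_neg hb).trans h4
      nlinarith [h5]
    have hsum_off : -(ε * ‖c j‖ * (s - ‖c j‖)) ≤
        ∑ k ∈ Finset.univ.erase j,
          RCLike.re ((starRingEnd ℂ) (c j) * (c k * (inner ℂ (w j) (w k) : ℂ))) := by
      have h6 := Finset.sum_le_sum hoff
      have h7 : ∑ k ∈ Finset.univ.erase j, -(ε * ‖c j‖ * ‖c k‖)
          = -(ε * ‖c j‖ * (s - ‖c j‖)) := by
        rw [Finset.sum_neg_distrib, ← Finset.mul_sum,
          Finset.sum_erase_eq_sub (Finset.mem_univ j)]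
      rw [h7] at h6
      exact h6
    nlinarith [hdiag, hsum_off]
  -- combine B
  have hB : q - ε * (s * s) ≤ ‖p‖ ^ 2 := by
    rw [hself, hexpand, map_sum]
    have h8 := Finset.sum_le_sum fun j (_ : j ∈ Finset.univ) => hperj j
    have h9 : ∑ j, (‖c j‖ ^ 2 - ε * ‖c j‖ * s) = q - ε * (s * s) := by
      rw [Finset.sum_sub_distrib]
      have h10 : ∑ j, ε * ‖c j‖ * s = ε * (s * s) := by
        rw [← Finset.sum_mul, ← Finset.mul_sum, ← hs]; ring
      rw [h10, ← hq]
    linarith [h8, h9]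
  -- (C) Cauchy–Schwarz
  have hC : s ^ 2 ≤ (N : ℝ) * q := by
    have := sq_sum_le_card_mul_sum_sq (s := (Finset.univ : Finset (Fin N)))
      (f := fun k => ‖c k‖)
    simpa [hs, hq] using this
  -- final arithmetic
  rcases eq_or_lt_of_le hs0 with h0 | hpos
  · nlinarith [hA]
  · have h5 : s * (1/2) * s ≤ ((N : ℝ) * ε) * s := by nlinarith [hB, hC, hA, hNε, hε0, hpos]
    have h6 : s * (1/2) ≤ (N : ℝ) * ε := le_of_mul_le_mul_right h5 hpos
    nlinarith [hA, h6, hε0]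

set_option maxHeartbeats 1000000 in
/-- if `H₀ ⊆ H` has dimension `M`, is invariant under the bounded
self-adjoint operator `A`, and `w₁,…,w_N ∈ H₀` is an `ε`-almost orthonormal set of
eigenvectors of `A` with `ε < 1/(2(M+1))`, then there are orthonormal
`w′₁,…,w′_{M−N} ∈ H₀`, orthogonal to all the `w_j`, and reals `μ′_j` with
`‖(A − μ′_j) w′_j‖ < 4Mε`. -/
theorem almost_invariant_complement
    {H : Type*} [NormedAddCommGroup H] [InnerProductSpace ℂ H] [CompleteSpace H]
    (A : H →L[ℂ] H) (hA : IsSelfAdjoint A)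
    (H₀ : Submodule ℂ H) [FiniteDimensional ℂ H₀] (M : ℕ)
    (hdim : Module.finrank ℂ H₀ = M)
    (hinv : ∀ x ∈ H₀, A x ∈ H₀)
    (N : ℕ) (w : Fin N → H) (hw : ∀ j, w j ∈ H₀)
    (ε : ℝ) (hε0 : 0 < ε) (hε : ε < 1 / (2 * ((M : ℝ) + 1)))
    (h1 : ∀ j, |‖w j‖ ^ 2 - 1| < ε)
    (h2 : ∀ j k, j ≠ k → ‖(inner ℂ (w j) (w k) : ℂ)‖ < ε)
    (μ : Fin N → ℝ) (h3 : ∀ j, ‖A (w j) - (μ j : ℂ) • w j‖ < ε) :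
    ∃ w' : Fin (M - N) → H,
      (∀ j, w' j ∈ H₀) ∧ Orthonormal ℂ w' ∧
      (∀ j k, (inner ℂ (w j) (w' k) : ℂ) = 0) ∧
      ∃ μ' : Fin (M - N) → ℝ, ∀ j, ‖A (w' j) - (μ' j : ℂ) • w' j‖ < 4 * M * ε := by
  rcases le_or_gt M N with hMN | hNM
  · haveI : IsEmpty (Fin (M - N)) := by
      rw [Nat.sub_eq_zero_of_le hMN]
      infer_instance
    exact ⟨fun _ => 0, fun j => isEmptyElim j,
      ⟨fun j => isEmptyElim j, fun j => isEmptyElim j⟩,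
      fun j k => isEmptyElim k, fun _ => 0, fun j => isEmptyElim j⟩
  · -- main case
    have hM0 : 0 < M := lt_of_le_of_lt (Nat.zero_le N) hNM
    set v : Fin N → H₀ := fun j => (⟨w j, hw j⟩ : H₀) with hv
    set W : Submodule ℂ H₀ := Submodule.span ℂ (Set.range v) with hW
    set K : Submodule ℂ H₀ := Wᗮ with hK
    let A₀ : H₀ →ₗ[ℂ] H₀ := (A : H →ₗ[ℂ] H).restrict hinv
    have hA₀coe : ∀ x : H₀, ((A₀ x : H₀) : H) = A (x : H) := fun x => rfl
    let T : K →ₗ[ℂ] K :=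
      K.orthogonalProjection.toLinearMap ∘ₗ (A₀ ∘ₗ K.subtype)
    have hsymm := hA.isSymmetric
    have hT : T.IsSymmetric := by
      intro x y
      have e1 : ∀ (u : H₀) (z : K), (inner ℂ ((K.orthogonalProjection u : K)) z : ℂ)
          = inner ℂ u (z : H₀) := by
        intro u z
        exact Submodule.inner_orthogonalProjectionOnto_eq_of_mem_right z u
      have e2 : ∀ (u : H₀) (z : K), (inner ℂ z ((K.orthogonalProjection u : K)) : ℂ)
          = inner ℂ (z : H₀) u := by
        intro u z
        rw [← inner_conj_symm, e1, inner_conj_symm]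
      show (inner ℂ ((K.orthogonalProjection (A₀ (x : H₀)) : K)) y : ℂ)
          = inner ℂ x ((K.orthogonalProjection (A₀ (y : H₀)) : K))
      rw [e1, e2]
      rw [Submodule.coe_inner, Submodule.coe_inner, hA₀coe, hA₀coe]
      exact hsymm _ _
    set n : ℕ := Module.finrank ℂ K with hn
    have hWle : Module.finrank ℂ W ≤ N := by
      have := finrank_range_le_card (R := ℂ) v
      simpa [Set.finrank, hW] using this
    have hrank : Module.finrank ℂ W + n = M := by
      rw [hn, hK, ← hdim]
      exact Submodule.finrank_add_finrank_orthogonal W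
    have hMNn : M - N ≤ n := by omega
    let b := hT.eigenvectorBasis rfl
    let lam := hT.eigenvalues rfl
    let emb : Fin (M - N) → Fin n := Fin.castLE hMNn
    refine ⟨fun j => (((b (emb j) : K) : H₀) : H), fun j => SetLike.coe_mem _, ?_, ?_, ?_⟩
    · -- orthonormal
      constructor
      · intro i
        have := b.orthonormal.1 (emb i)
        exact this
      · intro i j hij
        have hij' : emb i ≠ emb j := fun h => hij (Fin.castLE_injective hMNn h)
        exact b.orthonormal.2 hij'
    · -- orthogonality to w j
      intro j k
      have hvW : v j ∈ W := Submodule.subset_span ⟨j, rfl⟩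
      have hbK : ((b (emb k) : K) : H₀) ∈ Wᗮ := (b (emb k) : K).2
      have h0 : (inner ℂ (v j) ((b (emb k) : K) : H₀) : ℂ) =  0 :=
        Submodule.inner_right_of_mem_orthogonal hvW hbK
      rw [Submodule.coe_inner] at h0
      exact h0
    · -- eigen estimate
      refine ⟨fun j => lam (emb j), fun j => ?_⟩
      set i := emb j with hi
      set x : K := b i with hx
      set X : H₀ := (x : H₀) with hXdef
      have hX1 : ‖(X : H)‖ = 1 := by
        have := b.orthonormal.1 i
        exact this
      -- ⟪w k, X⟫ = 0
      have hwX : ∀ k, (inner ℂ (w k) ((X : H)) : ℂ) = 0 := by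
        intro k
        have hvW : v k ∈ W := Submodule.subset_span ⟨k, rfl⟩
        have h0 : (inner ℂ (v k) X : ℂ) = 0 :=
          Submodule.inner_right_of_mem_orthogonal hvW x.2
        rwa [Submodule.coe_inner] at h0
      -- p in W
      set p : H₀ := A₀ X - ((lam i : ℂ)) • X with hpdef
      have hPA : K.orthogonalProjection (A₀ X) = (lam i : ℂ) • x := by
        have := hT.apply_eigenvectorBasis rfl i
        exact this
      have hpW : p ∈ W := by
        have hmem : A₀ X - (K.orthogonalProjection (A₀ X) : K) ∈ Kᗮ :=
          Submodule.sub_starProjection_mem_orthogonal (K := K) (A₀ X)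
        rw [hPA] at hmem
        have : (((lam i : ℂ) • x : K) : H₀) = (lam i : ℂ) • X := rfl
        rw [this] at hmem
        rwa [hK, Submodule.orthogonal_orthogonal] at hmem
      obtain ⟨c, hc⟩ := (Submodule.mem_span_range_iff_exists_fun ℂ).mp hpW
      have hcH : ∑ k, c k • w k = ((p : H₀) : H) := by
        have := congrArg (fun z : H₀ => (z : H)) hc
        simpa using this
      have hpcoe : ((p : H₀) : H) = A ((X : H)) - (lam i : ℂ) • ((X : H)) := by
        simp [hpdef, hA₀coe]
      -- inner bounds
      have hip : ∀ k, ‖(inner ℂ (w k) ((p : H₀) : H) : ℂ)‖ ≤ ε := by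
        intro k
        have e1 : (inner ℂ (w k) ((p : H₀) : H) : ℂ)
            = inner ℂ (A (w k) - (μ k : ℂ) • w k) ((X : H)) := by
          rw [hpcoe, inner_sub_right, inner_smul_right, hwX k, mul_zero, sub_zero]
          rw [inner_sub_left, inner_smul_left, hwX k, mul_zero, sub_zero]
          exact (hsymm (w k) ((X : H))).symm
        rw [e1]
        calc ‖(inner ℂ (A (w k) - (μ k : ℂ) • w k) ((X : H)) : ℂ)‖
            ≤ ‖A (w k) - (μ k : ℂ) • w k‖ * ‖(X : H)‖ := norm_inner_le_norm _ _
          _ ≤ ε * 1 := by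
              rw [hX1]
              exact mul_le_mul_of_nonneg_right (h3 k).le zero_le_one
          _ = ε := mul_one ε
      have hNε : (N : ℝ) * ε ≤ 1 / 2 := by
        have hM1 : (1 : ℝ) ≤ (M : ℝ) := by exact_mod_cast hM0
        have hNM' : (N : ℝ) ≤ (M : ℝ) := by exact_mod_cast hNM.le
        have hD : (0 : ℝ) < 2 * ((M : ℝ) + 1) := by positivity
        have hεD : ε * (2 * ((M : ℝ) + 1)) < 1 := (lt_div_iff₀ hD).mp hε
        nlinarith
      have hkey := key_bound N w ε hε0 h1 h2 hNε c ((p : H₀) : H) hcH hip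
      have hgoal : ‖A (((X : H))) - (lam i : ℂ) • ((X : H))‖ < 4 * M * ε := by
        have hb2 : (0 : ℝ) ≤ 4 * M * ε := by positivity
        refine lt_of_pow_lt_pow_left₀ 2 hb2 ?_
        rw [← hpcoe]
        have hstrict : 2 * (N : ℝ) * ε ^ 2 < (4 * M * ε) ^ 2 := by
          have hM1 : (1 : ℝ) ≤ (M : ℝ) := by exact_mod_cast hM0
          have hNM' : (N : ℝ) < (M : ℝ) := by exact_mod_cast hNM
          have hε2 : (0:ℝ) < ε ^ 2 := by positivity
          have h16 : 2 * (N : ℝ) < 16 * (M:ℝ)^2 := by nlinarith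
          nlinarith [mul_lt_mul_of_pos_right h16 hε2]
        calc ‖((p : H₀) : H)‖ ^ 2 ≤ 2 * N * ε ^ 2 := hkey
          _ < (4 * M * ε) ^ 2 := hstrict
      exact hgoal
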